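/- The Cantor string is not Minkowski measurable: the limit lim_{ε→0⁺} V(ε) ε^{D−1}, with D = log_3 2 and V(ε) the volume of the inner ε-neighborhood of the Cantor set within the Cantor string, does not exist. -/

import Mathlib

open MeasureTheory Filter Set Pointwise

lemma preCantorSet_subset_unitInterval' {n : ℕ} : preCantorSet n ⊆ Icc 0 1 := by
  induction n with
  | zero => exact subset_rfl
  | succ n ih =>
    rintro x (⟨y, hy, rfl⟩ | ⟨y, hy, rfl⟩) <;>
      · obtain ⟨h0, h1⟩ := ih hy
        constructor <;> simp only [] <;> linarith

lemma one_mem_preCantorSet (n : ℕ) : 1 ∈ preCantorSet n := by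
  induction n with
  | zero => exact ⟨zero_le_one, le_rfl⟩
  | succ n ih => exact Or.inr ⟨1, ih, by norm_num⟩

lemma one_mem_cantorSet : (1 : ℝ) ∈ cantorSet := mem_iInter.mpr one_mem_preCantorSet

lemma div3_mem_cantorSet {x : ℝ} (hx : x ∈ cantorSet) : x / 3 ∈ cantorSet := by
  rw [cantorSet, mem_iInter]
  intro n
  match n with
  | 0 =>
    obtain ⟨h0, h1⟩ := cantorSet_subset_unitInterval hx
    exact ⟨by linarith, by linarith⟩
  | m + 1 => exact Or.inl ⟨x, mem_iInter.mp hx m, rfl⟩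

lemma two_add_div3_mem_cantorSet {x : ℝ} (hx : x ∈ cantorSet) : (2 + x) / 3 ∈ cantorSet := by
  rw [cantorSet, mem_iInter]
  intro n
  match n with
  | 0 =>
    obtain ⟨h0, h1⟩ := cantorSet_subset_unitInterval hx
    exact ⟨by linarith, by linarith⟩
  | m + 1 => exact Or.inr ⟨x, mem_iInter.mp hx m, rfl⟩

lemma third_mem_cantorSet : (1/3 : ℝ) ∈ cantorSet := by
  simpa using div3_mem_cantorSet one_mem_cantorSet

lemma twothird_mem_cantorSet : (2/3 : ℝ) ∈ cantorSet := by
  simpa using two_add_div3_mem_cantorSet zero_mem_cantorSet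

/-- The Cantor set avoids the open middle third. -/
lemma cantorSet_subset_union : cantorSet ⊆ Icc (0:ℝ) (1/3) ∪ Icc (2/3) 1 := by
  intro x hx
  have h1 : x ∈ preCantorSet 1 := mem_iInter.mp hx 1
  rcases h1 with ⟨y, hy, rfl⟩ | ⟨y, hy, rfl⟩
  · obtain ⟨h0, h1⟩ := hy
    exact Or.inl ⟨by linarith, by linarith⟩
  · obtain ⟨h0, h1⟩ := hy
    exact Or.inr ⟨by linarith, by linarith⟩

lemma mul3_mem_cantorSet {x : ℝ} (hx : x ∈ cantorSet) (h : x ≤ 1/3) : 3 * x ∈ cantorSet := by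
  rw [cantorSet, mem_iInter]
  intro n
  have hn : x ∈ preCantorSet (n + 1) := mem_iInter.mp hx (n + 1)
  rcases hn with ⟨y, hy, rfl⟩ | ⟨y, hy, rfl⟩
  · have : 3 * (y / 3) = y := by ring
    rw [this]; exact hy
  · obtain ⟨h0, h1⟩ := preCantorSet_subset_unitInterval' hy
    exfalso; simp only [] at h; linarith

lemma mul3_sub_two_mem_cantorSet {x : ℝ} (hx : x ∈ cantorSet) (h : 2/3 ≤ x) :
    3 * x - 2 ∈ cantorSet := by
  rw [cantorSet, mem_iInter]
  intro n
  have hn : x ∈ preCantorSet (n + 1) := mem_iInter.mp hx (n + 1)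
  rcases hn with ⟨y, hy, rfl⟩ | ⟨y, hy, rfl⟩
  · obtain ⟨h0, h1⟩ := preCantorSet_subset_unitInterval' hy
    exfalso; simp only [] at h; linarith
  · have : 3 * ((2 + y) / 3) - 2 = y := by ring
    rw [this]; exact hy

lemma image_div3 (s : Set ℝ) : (fun y : ℝ => y / 3) '' s = (3⁻¹ : ℝ) • s := by
  ext x; simp [Set.mem_smul_set, div_eq_inv_mul, eq_comm]

lemma volume_inv3_smul (s : Set ℝ) :
    volume ((3⁻¹ : ℝ) • s) = ENNReal.ofReal 3⁻¹ * volume s := by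
  rw [Measure.addHaar_smul]
  norm_num [abs_of_pos]

lemma image_translate (a : ℝ) (s : Set ℝ) :
    volume ((fun y => a + y) '' s) = volume s := by
  have h : (fun y => a + y) '' s = (fun x => -a + x) ⁻¹' s := by
    ext x
    simp only [mem_image, mem_preimage]
    constructor
    · rintro ⟨y, hy, rfl⟩; simpa
    · intro hx; exact ⟨-a + x, hx, by ring⟩
  rw [h, measure_preimage_add]

lemma image_g (s : Set ℝ) :
    (fun y : ℝ => (2 + y) / 3) '' s = (fun y : ℝ => 2/3 + y) '' ((3⁻¹ : ℝ) • s) := by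
  rw [← image_div3, ← Set.image_comp]
  apply Set.image_congr'
  intro x; simp; ring

lemma volume_image_g (s : Set ℝ) :
    volume ((fun y : ℝ => (2 + y) / 3) '' s) = ENNReal.ofReal 3⁻¹ * volume s := by
  rw [image_g, image_translate, volume_inv3_smul]

lemma volume_preCantorSet (n : ℕ) :
    volume (preCantorSet n) ≤ ENNReal.ofReal ((2/3 : ℝ) ^ n) := by
  induction n with
  | zero => simp
  | succ n ih =>
    rw [preCantorSet_succ]
    calc volume ((· / 3) '' preCantorSet n ∪ (fun x ↦ (2 + x) / 3) '' preCantorSet n)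
        ≤ volume ((· / 3) '' preCantorSet n) + volume ((fun x ↦ (2 + x) / 3) '' preCantorSet n) :=
          measure_union_le _ _
      _ = ENNReal.ofReal 3⁻¹ * volume (preCantorSet n)
            + ENNReal.ofReal 3⁻¹ * volume (preCantorSet n) := by
          rw [show ((· / 3) '' preCantorSet n) = (fun y : ℝ => y / 3) '' preCantorSet n from rfl,
            image_div3, volume_inv3_smul, volume_image_g]
      _ ≤ ENNReal.ofReal 3⁻¹ * ENNReal.ofReal ((2/3 : ℝ) ^ n)
            + ENNReal.ofReal 3⁻¹ * ENNReal.ofReal ((2/3 : ℝ) ^ n) := by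
          gcongr
      _ = ENNReal.ofReal ((2/3 : ℝ) ^ (n + 1)) := by
          rw [← ENNReal.ofReal_mul (by norm_num), ← ENNReal.ofReal_add (by positivity) (by positivity)]
          congr 1
          ring

lemma volume_cantorSet : volume cantorSet = 0 := by
  have hle : ∀ n, volume cantorSet ≤ ENNReal.ofReal ((2/3 : ℝ) ^ n) := fun n =>
    le_trans (measure_mono (iInter_subset _ n)) (volume_preCantorSet n)
  have htend : Tendsto (fun n : ℕ => ENNReal.ofReal ((2/3 : ℝ) ^ n)) atTop (nhds 0) := by
    rw [show (0 : ENNReal) = ENNReal.ofReal 0 by simp]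
    apply ENNReal.tendsto_ofReal
    apply tendsto_pow_atTop_nhds_zero_of_lt_one <;> norm_num
  exact le_antisymm (ge_of_tendsto' htend hle) zero_le

noncomputable def cantorTube (ε : ℝ) : Set ℝ :=
  {x ∈ Ioo (0 : ℝ) 1 \ cantorSet | Metric.infDist x cantorSet < ε}

lemma cantorSet_nonempty : cantorSet.Nonempty := ⟨0, zero_mem_cantorSet⟩

lemma mem_cantorTube_iff {x ε : ℝ} :
    x ∈ cantorTube ε ↔ (x ∈ Ioo (0:ℝ) 1 ∧ x ∉ cantorSet) ∧ ∃ y ∈ cantorSet, |x - y| < ε := by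
  simp only [cantorTube, mem_sep_iff, mem_diff, Metric.infDist_lt_iff cantorSet_nonempty,
    Real.dist_eq, mem_setOf_eq]

/-- For `ε > 1/6`, the tube is everything. -/
lemma cantorTube_big {ε : ℝ} (hε : 1/6 < ε) : cantorTube ε = Ioo (0:ℝ) 1 \ cantorSet := by
  ext x
  rw [mem_cantorTube_iff]
  constructor
  · rintro ⟨⟨h1, h2⟩, -⟩; exact ⟨h1, h2⟩
  · rintro ⟨h1, h2⟩
    refine ⟨⟨h1, h2⟩, ?_⟩
    obtain ⟨hx0, hx1⟩ := h1
    rcases le_or_gt x (1/6) with h | h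
    · exact ⟨0, zero_mem_cantorSet, by rw [sub_zero, abs_of_pos hx0]; linarith⟩
    rcases le_or_gt x (1/2) with h' | h'
    · exact ⟨1/3, third_mem_cantorSet, by rw [abs_lt]; constructor <;> linarith⟩
    rcases le_or_gt x (5/6) with h'' | h''
    · exact ⟨2/3, twothird_mem_cantorSet, by rw [abs_lt]; constructor <;> linarith⟩
    · exact ⟨1, one_mem_cantorSet, by rw [abs_lt]; constructor <;> linarith⟩

/-- Self-similar decomposition of the tube. -/
lemma cantorTube_eq {ε : ℝ} (hε0 : 0 < ε) (hε : ε ≤ 1/6) :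
    cantorTube ε =
      ((fun y : ℝ => y / 3) '' cantorTube (3 * ε) ∪
        (fun y : ℝ => (2 + y) / 3) '' cantorTube (3 * ε)) ∪
      (Ioo (1/3 : ℝ) (1/3 + ε) ∪ Ioo (2/3 - ε : ℝ) (2/3)) := by
  ext x
  constructor
  · intro hx
    obtain ⟨⟨⟨hx0, hx1⟩, hxC⟩, y, hyC, hxy⟩ := mem_cantorTube_iff.mp hx
    have hx3 : x ≠ 1/3 := fun h => hxC (h ▸ third_mem_cantorSet)
    have hx23 : x ≠ 2/3 := fun h => hxC (h ▸ twothird_mem_cantorSet)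
    rcases lt_trichotomy x (1/3) with hc | hc | hc
    · -- left third
      left; left
      refine ⟨3 * x, ?_, by ring⟩
      rw [mem_cantorTube_iff]
      have hy13 : y ≤ 1/3 := by
        rcases cantorSet_subset_union hyC with ⟨-, h⟩ | ⟨h, -⟩
        · exact h
        · exfalso; rw [abs_lt] at hxy; linarith
      refine ⟨⟨⟨by linarith, by linarith⟩, ?_⟩, 3 * y, mul3_mem_cantorSet hyC hy13, ?_⟩
      · intro hmem
        exact hxC (by simpa [mul_div_cancel_left₀] using div3_mem_cantorSet hmem)
      · rw [show 3*x - 3*y = 3*(x-y) by ring, abs_mul, abs_of_pos (by norm_num : (0:ℝ) < 3)]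
        linarith [hxy]
    · exact absurd hc hx3
    · rcases lt_trichotomy x (2/3) with hd | hd | hd
      · -- middle gap
        right
        rcases cantorSet_subset_union hyC with ⟨-, h⟩ | ⟨h, -⟩
        · left
          constructor
          · exact hc
          · rw [abs_lt] at hxy; linarith
        · right
          constructor
          · rw [abs_lt] at hxy; linarith
          · exact hd
      · exact absurd hd hx23
      · -- right third
        left; right
        refine ⟨3 * x - 2, ?_, by ring⟩
        rw [mem_cantorTube_iff]
        have hy23 : 2/3 ≤ y := by
          rcases cantorSet_subset_union hyC with ⟨-, h⟩ | ⟨h, -⟩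
          · exfalso; rw [abs_lt] at hxy; linarith
          · exact h
        refine ⟨⟨⟨by linarith, by linarith⟩, ?_⟩, 3 * y - 2,
          mul3_sub_two_mem_cantorSet hyC hy23, ?_⟩
        · intro hmem
          have := two_add_div3_mem_cantorSet hmem
          rw [show (2 + (3*x - 2))/3 = x by ring] at this
          exact hxC this
        · rw [show (3*x - 2) - (3*y - 2) = 3*(x-y) by ring, abs_mul,
            abs_of_pos (by norm_num : (0:ℝ) < 3)]
          linarith [hxy]
  · rintro ((⟨w, hw, rfl⟩ | ⟨w, hw, rfl⟩) | (⟨h1, h2⟩ | ⟨h1, h2⟩))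
    · obtain ⟨⟨⟨hw0, hw1⟩, hwC⟩, z, hzC, hwz⟩ := mem_cantorTube_iff.mp hw
      rw [mem_cantorTube_iff]
      refine ⟨⟨⟨by linarith, by linarith⟩, ?_⟩, z / 3, div3_mem_cantorSet hzC, ?_⟩
      · intro hmem
        have : w/3 ≤ 1/3 := by linarith
        have := mul3_mem_cantorSet hmem this
        rw [show 3 * (w/3) = w by ring] at this
        exact hwC this
      · rw [show w/3 - z/3 = (w - z)/3 by ring, abs_div, abs_of_pos (by norm_num : (0:ℝ) < 3)]
        linarith [abs_nonneg (w - z)]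
    · obtain ⟨⟨⟨hw0, hw1⟩, hwC⟩, z, hzC, hwz⟩ := mem_cantorTube_iff.mp hw
      rw [mem_cantorTube_iff]
      refine ⟨⟨⟨by linarith, by linarith⟩, ?_⟩, (2 + z) / 3,
        two_add_div3_mem_cantorSet hzC, ?_⟩
      · intro hmem
        have h23 : (2:ℝ)/3 ≤ (2 + w)/3 := by linarith
        have := mul3_sub_two_mem_cantorSet hmem h23
        rw [show 3 * ((2 + w)/3) - 2 = w by ring] at this
        exact hwC this
      · rw [show (2 + w)/3 - (2 + z)/3 = (w - z)/3 by ring, abs_div,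
          abs_of_pos (by norm_num : (0:ℝ) < 3)]
        linarith [abs_nonneg (w - z)]
    · rw [mem_cantorTube_iff]
      refine ⟨⟨⟨by linarith, by linarith⟩, ?_⟩, 1/3, third_mem_cantorSet, ?_⟩
      · intro hmem
        rcases cantorSet_subset_union hmem with ⟨-, h⟩ | ⟨h, -⟩ <;> linarith
      · rw [abs_of_pos (by linarith)]; linarith
    · rw [mem_cantorTube_iff]
      refine ⟨⟨⟨by linarith, by linarith⟩, ?_⟩, 2/3, twothird_mem_cantorSet, ?_⟩
      · intro hmem
        rcases cantorSet_subset_union hmem with ⟨-, h⟩ | ⟨h, -⟩ <;> linarith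
      · rw [abs_of_neg (by linarith)]; linarith

lemma image_div3_preimage (s : Set ℝ) :
    (fun y : ℝ => y / 3) '' s = (fun x : ℝ => 3 * x) ⁻¹' s := by
  ext x
  simp only [mem_image, mem_preimage]
  constructor
  · rintro ⟨y, hy, rfl⟩; simpa [mul_div_cancel₀] using hy
  · intro hx; exact ⟨3 * x, hx, by ring⟩

lemma image_g_preimage (s : Set ℝ) :
    (fun y : ℝ => (2 + y) / 3) '' s = (fun x : ℝ => 3 * x - 2) ⁻¹' s := by
  ext x
  simp only [mem_image, mem_preimage]
  constructor
  · rintro ⟨y, hy, rfl⟩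
    have : 3 * ((2 + y) / 3) - 2 = y := by ring
    rwa [this]
  · intro hx; exact ⟨3 * x - 2, hx, by ring⟩

lemma isOpen_cantorTube (ε : ℝ) : IsOpen (cantorTube ε) := by
  have h : cantorTube ε =
      (Ioo (0:ℝ) 1 ∩ cantorSetᶜ) ∩ {x : ℝ | Metric.infDist x cantorSet < ε} := by
    ext x
    simp only [cantorTube, mem_sep_iff, mem_diff, mem_inter_iff, mem_compl_iff, mem_setOf_eq]
  rw [h]
  exact ((isOpen_Ioo.inter isClosed_cantorSet.isOpen_compl).inter
    (isOpen_lt (Metric.continuous_infDist_pt _) continuous_const))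

lemma cantorTube_subset (ε : ℝ) : cantorTube ε ⊆ Ioo 0 1 := fun x hx => hx.1.1

lemma volume_cantorTube_ne_top (ε : ℝ) : volume (cantorTube ε) ≠ ⊤ := by
  refine ne_top_of_le_ne_top ?_ (measure_mono (cantorTube_subset ε))
  simp

noncomputable def V (ε : ℝ) : ℝ := (volume (cantorTube ε)).toReal

lemma V_rec {ε : ℝ} (hε0 : 0 < ε) (hε : ε ≤ 1/6) : V ε = 2 * ε + 2/3 * V (3 * ε) := by
  have hT := volume_cantorTube_ne_top (3 * ε)
  -- subset facts for disjointness
  have hA1 : (fun y : ℝ => y / 3) '' cantorTube (3 * ε) ⊆ Ioo (0:ℝ) (1/3) := by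
    rintro x ⟨y, hy, rfl⟩
    obtain ⟨h0, h1⟩ := cantorTube_subset _ hy
    exact ⟨by linarith, by linarith⟩
  have hA2 : (fun y : ℝ => (2 + y) / 3) '' cantorTube (3 * ε) ⊆ Ioo (2/3:ℝ) 1 := by
    rintro x ⟨y, hy, rfl⟩
    obtain ⟨h0, h1⟩ := cantorTube_subset _ hy
    exact ⟨by linarith, by linarith⟩
  have hB1 : Ioo (1/3 : ℝ) (1/3 + ε) ⊆ Ioo (1/3 : ℝ) (1/2) := by
    intro x ⟨h0, h1⟩; exact ⟨h0, by linarith⟩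
  have hB2 : Ioo (2/3 - ε : ℝ) (2/3) ⊆ Ioo (1/2 : ℝ) (2/3) := by
    intro x ⟨h0, h1⟩; exact ⟨by linarith, h1⟩
  have mA2 : MeasurableSet ((fun y : ℝ => (2 + y) / 3) '' cantorTube (3 * ε)) := by
    rw [image_g_preimage]
    exact (isOpen_cantorTube _).measurableSet.preimage (by fun_prop)
  have mB : MeasurableSet (Ioo (1/3 : ℝ) (1/3 + ε) ∪ Ioo (2/3 - ε : ℝ) (2/3)) :=
    measurableSet_Ioo.union measurableSet_Ioo
  have dA : Disjoint ((fun y : ℝ => y / 3) '' cantorTube (3 * ε))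
      ((fun y : ℝ => (2 + y) / 3) '' cantorTube (3 * ε)) := by
    refine Set.disjoint_left.mpr fun x hx1 hx2 => ?_
    have := hA1 hx1; have := hA2 hx2
    simp only [mem_Ioo] at *
    linarith [this.1]
  have dB : Disjoint (Ioo (1/3 : ℝ) (1/3 + ε)) (Ioo (2/3 - ε : ℝ) (2/3)) := by
    refine Set.disjoint_left.mpr fun x hx1 hx2 => ?_
    have := hB1 hx1; have := hB2 hx2
    simp only [mem_Ioo] at *
    linarith [this.1]
  have dAB : Disjoint ((fun y : ℝ => y / 3) '' cantorTube (3 * ε) ∪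
      (fun y : ℝ => (2 + y) / 3) '' cantorTube (3 * ε))
      (Ioo (1/3 : ℝ) (1/3 + ε) ∪ Ioo (2/3 - ε : ℝ) (2/3)) := by
    refine Set.disjoint_left.mpr fun x hx1 hx2 => ?_
    rcases hx1 with h | h
    · have := hA1 h
      rcases hx2 with h' | h'
      · have := hB1 h'; simp only [mem_Ioo] at *; linarith
      · have := hB2 h'; simp only [mem_Ioo] at *; linarith
    · have := hA2 h
      rcases hx2 with h' | h'
      · have := hB1 h'; simp only [mem_Ioo] at *; linarith
      · have := hB2 h'; simp only [mem_Ioo] at *; linarith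
  have hvol : volume (cantorTube ε) =
      ENNReal.ofReal 3⁻¹ * volume (cantorTube (3 * ε)) +
      ENNReal.ofReal 3⁻¹ * volume (cantorTube (3 * ε)) +
      (ENNReal.ofReal ε + ENNReal.ofReal ε) := by
    rw [cantorTube_eq hε0 hε, measure_union dAB mB, measure_union dA mA2,
      measure_union dB measurableSet_Ioo, image_div3, volume_inv3_smul, volume_image_g,
      Real.volume_Ioo, Real.volume_Ioo]
    norm_num
  have h13 : (ENNReal.ofReal 3⁻¹ * volume (cantorTube (3 * ε))).toReal
      = 3⁻¹ * V (3 * ε) := by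
    rw [ENNReal.toReal_mul, ENNReal.toReal_ofReal (by norm_num)]
    rfl
  have hfin : ENNReal.ofReal 3⁻¹ * volume (cantorTube (3 * ε)) ≠ ⊤ :=
    ENNReal.mul_ne_top ENNReal.ofReal_ne_top hT
  rw [V, hvol]
  rw [ENNReal.toReal_add (ENNReal.add_ne_top.mpr ⟨hfin, hfin⟩)
      (ENNReal.add_ne_top.mpr ⟨ENNReal.ofReal_ne_top, ENNReal.ofReal_ne_top⟩),
    ENNReal.toReal_add hfin hfin,
    ENNReal.toReal_add ENNReal.ofReal_ne_top ENNReal.ofReal_ne_top, h13,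
    ENNReal.toReal_ofReal hε0.le]
  ring

lemma V_big {ε : ℝ} (hε : 1/6 < ε) : V ε = 1 := by
  rw [V, cantorTube_big hε, measure_diff_null volume_cantorSet, Real.volume_Ioo]
  norm_num

lemma V_formula {a : ℝ} (ha : 1/6 < a) (ha' : a ≤ 1/2) (n : ℕ) :
    V (a * (1/3)^n) = (1 + 2*a) * (2/3)^n - 2*a*(1/3)^n := by
  induction n with
  | zero => simpa using V_big ha
  | succ n ih =>
    have hpos : (0:ℝ) < a * (1/3)^(n+1) := by positivity
    have hle : a * (1/3)^(n+1) ≤ 1/6 := by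
      have h1 : ((1:ℝ)/3)^(n+1) ≤ (1/3)^1 :=
        pow_le_pow_of_le_one (by norm_num) (by norm_num) (by omega)
      have h2 : a * (1/3)^(n+1) ≤ (1/2) * (1/3)^1 := by
        apply mul_le_mul ha' (by simpa using h1) (by positivity) (by norm_num)
      simpa using h2.trans (by norm_num)
    have h3 : 3 * (a * (1/3)^(n+1)) = a * (1/3)^n := by
      rw [pow_succ]; ring
    rw [V_rec hpos hle, h3, ih, pow_succ, pow_succ]
    ring

noncomputable def D : ℝ := Real.log 2 / Real.log 3

lemma log2_pos : 0 < Real.log 2 := Real.log_pos (by norm_num)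
lemma log3_pos : 0 < Real.log 3 := Real.log_pos (by norm_num)

lemma log_5_3_lt : 5 * Real.log 3 < 8 * Real.log 2 := by
  have h := Real.log_lt_log (by norm_num : (0:ℝ) < 243) (by norm_num : (243:ℝ) < 256)
  rw [show (243:ℝ) = 3^(5:ℕ) by norm_num, show (256:ℝ) = 2^(8:ℕ) by norm_num,
    Real.log_pow, Real.log_pow] at h
  push_cast at h
  linarith

lemma key_ineq : (Real.log 3)^2 < (Real.log 2)^2 + Real.log 2 * Real.log 3 := by
  nlinarith [log2_pos, log3_pos, log_5_3_lt]

lemma rpow_3_D : (3:ℝ) ^ D = 2 := by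
  rw [D, Real.rpow_def_of_pos (by norm_num : (0:ℝ) < 3),
    mul_comm, div_mul_cancel₀ _ (ne_of_gt log3_pos), Real.exp_log (by norm_num)]

lemma rpow_third : ((1:ℝ)/3) ^ (D - 1) = 3/2 := by
  rw [show ((1:ℝ)/3) = 3⁻¹ by norm_num, Real.inv_rpow (by norm_num),
    Real.rpow_sub (by norm_num : (0:ℝ) < 3), rpow_3_D, Real.rpow_one]
  norm_num

lemma rpow_third_pow (n : ℕ) : ((((1:ℝ)/3)^n : ℝ)) ^ (D - 1) = (3/2)^n := by
  rw [← Real.rpow_natCast ((1:ℝ)/3) n, ← Real.rpow_mul (by norm_num), mul_comm,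
    Real.rpow_mul (by norm_num), rpow_third, Real.rpow_natCast]

lemma rpow_seq {a : ℝ} (ha : 0 < a) (n : ℕ) :
    (a * ((1:ℝ)/3)^n) ^ (D - 1) = a ^ (D - 1) * (3/2)^n := by
  rw [Real.mul_rpow ha.le (by positivity), rpow_third_pow]

lemma prod_formula {a : ℝ} (ha : 0 < a) (n : ℕ) :
    ((1 + 2*a) * (2/3:ℝ)^n - 2*a*(1/3:ℝ)^n) * (a * ((1:ℝ)/3)^n) ^ (D - 1)
      = a ^ (D - 1) * ((1 + 2*a) - 2*a*(1/2:ℝ)^n) := by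
  rw [rpow_seq ha]
  have h1 : (2/3:ℝ)^n * (3/2:ℝ)^n = 1 := by
    rw [← mul_pow]; norm_num
  have h2 : (1/3:ℝ)^n * (3/2:ℝ)^n = (1/2:ℝ)^n := by
    rw [← mul_pow]; norm_num
  calc ((1 + 2*a) * (2/3:ℝ)^n - 2*a*(1/3:ℝ)^n) * (a ^ (D-1) * (3/2)^n)
      = a ^ (D-1) * ((1 + 2*a) * ((2/3:ℝ)^n * (3/2:ℝ)^n) - 2*a*((1/3:ℝ)^n * (3/2:ℝ)^n)) := by
        ring
    _ = a ^ (D - 1) * ((1 + 2*a) - 2*a*(1/2:ℝ)^n) := by rw [h1, h2]; ring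

lemma tendsto_val {a : ℝ} (ha : 0 < a) :
    Tendsto (fun n : ℕ => a ^ (D - 1) * ((1 + 2*a) - 2*a*(1/2:ℝ)^n)) atTop
      (nhds (a ^ (D - 1) * (1 + 2*a))) := by
  have h : Tendsto (fun n : ℕ => (1/2:ℝ)^n) atTop (nhds 0) :=
    tendsto_pow_atTop_nhds_zero_of_lt_one (by norm_num) (by norm_num)
  have := (tendsto_const_nhds (x := (1 + 2*a)) (f := atTop)).sub ((h.const_mul (2*a)))
  simpa using this.const_mul (a ^ (D - 1))

lemma tendsto_seq {a : ℝ} (ha : 0 < a) :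
    Tendsto (fun n : ℕ => a * ((1:ℝ)/3)^n) atTop (nhdsWithin 0 (Ioi 0)) := by
  rw [tendsto_nhdsWithin_iff]
  constructor
  · have h : Tendsto (fun n : ℕ => ((1:ℝ)/3)^n) atTop (nhds 0) :=
      tendsto_pow_atTop_nhds_zero_of_lt_one (by norm_num) (by norm_num)
    simpa using h.const_mul a
  · exact Eventually.of_forall fun n => mem_Ioi.mpr (by positivity)

lemma final_ineq :
    ¬ ((1/2:ℝ) ^ (D - 1) * (1 + 2*(1/2)) = (1/4:ℝ) ^ (D - 1) * (1 + 2*(1/4))) := by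
  intro h
  set c := (1/2:ℝ) ^ (D - 1) with hc
  have hcpos : 0 < c := Real.rpow_pos_of_pos (by norm_num) _
  have h4 : (1/4:ℝ) ^ (D - 1) = c^2 := by
    rw [show ((1:ℝ)/4) = (1/2:ℝ)^(2:ℕ) by norm_num, ← Real.rpow_natCast ((1:ℝ)/2) 2,
      ← Real.rpow_mul (by norm_num), mul_comm, Real.rpow_mul (by norm_num), hc,
      Real.rpow_natCast]
  rw [h4] at h
  have hc43 : c = 4/3 := by nlinarith
  have hlog : Real.log c = (D - 1) * Real.log (1/2) := Real.log_rpow (by norm_num) _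
  rw [hc43] at hlog
  have h43 : Real.log (4/3) = 2 * Real.log 2 - Real.log 3 := by
    rw [Real.log_div (by norm_num) (by norm_num), show (4:ℝ) = 2^(2:ℕ) by norm_num,
      Real.log_pow]
    push_cast
    ring
  have h12 : Real.log (1/2 : ℝ) = -Real.log 2 := by
    rw [one_div, Real.log_inv]
  rw [h43, h12, D] at hlog
  have hb := log3_pos
  have key := key_ineq
  have hD : (Real.log 2 / Real.log 3 - 1) * (-Real.log 2) * Real.log 3
      = (2 * Real.log 2 - Real.log 3) * Real.log 3 := by rw [← hlog]
  field_simp at hD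
  nlinarith [hD, key, log2_pos, log3_pos]

/-- The inner tube volume of the Cantor string: the Lebesgue measure of the
ε-neighborhood of the Cantor set within `Ω = (0,1) \ C`. -/
noncomputable def cantorStringTubeVolume (ε : ℝ) : ℝ :=
  (volume {x ∈ Ioo (0 : ℝ) 1 \ cantorSet | Metric.infDist x cantorSet < ε}).toReal

/-- The Cantor string is not Minkowski measurable: with `D = log₃ 2`, the
limit `lim_{ε→0⁺} V(ε) ε^{D−1}` does not exist. -/
theorem cantor_string_not_minkowski_measurable :
    ¬ ∃ L : ℝ, Tendsto
        (fun ε : ℝ => cantorStringTubeVolume ε * ε ^ (Real.log 2 / Real.log 3 - 1))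
        (nhdsWithin 0 (Ioi 0)) (nhds L) := by
  rintro ⟨L, hL⟩
  have key : ∀ a : ℝ, 1/6 < a → a ≤ 1/2 → L = a ^ (D - 1) * (1 + 2*a) := by
    intro a ha ha'
    have ha0 : 0 < a := by linarith
    have h1 := hL.comp (tendsto_seq ha0)
    have h2 : (fun ε : ℝ => cantorStringTubeVolume ε * ε ^ (Real.log 2 / Real.log 3 - 1))
        ∘ (fun n : ℕ => a * ((1:ℝ)/3)^n)
        = fun n : ℕ => a ^ (D - 1) * ((1 + 2*a) - 2*a*(1/2:ℝ)^n) := by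
      funext n
      show cantorStringTubeVolume (a * ((1:ℝ)/3)^n)
          * (a * ((1:ℝ)/3)^n) ^ (Real.log 2 / Real.log 3 - 1) = _
      rw [show cantorStringTubeVolume (a * ((1:ℝ)/3)^n) = V (a * ((1:ℝ)/3)^n) from rfl,
        V_formula ha ha' n, show Real.log 2 / Real.log 3 = D from rfl]
      exact prod_formula ha0 n
    rw [h2] at h1
    exact tendsto_nhds_unique h1 (tendsto_val ha0)
  have e1 := key (1/2) (by norm_num) (by norm_num)
  have e2 := key (1/4) (by norm_num) (by norm_num)
  exact final_ineq (e1.symm.trans e2)
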